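/- Let e₁, e₂, n : ℝ² → ℝ³ be differentiable with (e₁(X), e₂(X), n(X)) an orthonormal triple for every X (eᵢ·eⱼ = δᵢⱼ, eᵢ·n = 0, |n| = 1). Then n · (∂₁n × ∂₂n) = ∂₁e₁ · ∂₂e₂ − ∂₁e₂ · ∂₂e₁ whenever additionally n = e₁ × e₂. -/

import Mathlib

open Matrix

lemma lagrange' (a b c d : Fin 3 → ℝ) :
    (a ⨯₃ b) ⬝ᵥ (c ⨯₃ d) = (a ⬝ᵥ c) * (b ⬝ᵥ d) - (a ⬝ᵥ d) * (b ⬝ᵥ c) := by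
  simp [cross_apply, dotProduct, Fin.sum_univ_three]
  ring

lemma parseval' (a b p s : Fin 3 → ℝ) (h1 : a ⬝ᵥ a = 1) (h2 : b ⬝ᵥ b = 1)
    (h3 : a ⬝ᵥ b = 0) :
    p ⬝ᵥ s = (p ⬝ᵥ a) * (s ⬝ᵥ a) + (p ⬝ᵥ b) * (s ⬝ᵥ b) + (p ⬝ᵥ (a ⨯₃ b)) * (s ⬝ᵥ (a ⨯₃ b)) := by
  simp only [cross_apply, dotProduct, Fin.sum_univ_three, Matrix.cons_val_zero,
    Matrix.cons_val_one, Matrix.head_cons, Matrix.cons_val_two, Matrix.tail_cons] at *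
  linear_combination
    ((p 0*b 0+p 1*b 1+p 2*b 2)*(s 0*b 0+s 1*b 1+s 2*b 2)
      - (p 0*s 0+p 1*s 1+p 2*s 2)*(b 0*b 0+b 1*b 1+b 2*b 2)) * h1 +
    ((p 0*a 0+p 1*a 1+p 2*a 2)*(s 0*a 0+s 1*a 1+s 2*a 2)
      - (p 0*s 0+p 1*s 1+p 2*s 2)) * h2 +
    ((p 0*s 0+p 1*s 1+p 2*s 2)*(a 0*b 0+a 1*b 1+a 2*b 2)
      - (p 0*b 0+p 1*b 1+p 2*b 2)*(s 0*a 0+s 1*a 1+s 2*a 2)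
      - (p 0*a 0+p 1*a 1+p 2*a 2)*(s 0*b 0+s 1*b 1+s 2*b 2)) * h3

lemma fderiv_dot' (f g : ℝ × ℝ → Fin 3 → ℝ) (hf : Differentiable ℝ f)
    (hg : Differentiable ℝ g) (X v : ℝ × ℝ) :
    fderiv ℝ (fun Y => f Y ⬝ᵥ g Y) X v
      = fderiv ℝ f X v ⬝ᵥ g X + f X ⬝ᵥ fderiv ℝ g X v := by
  have hfi := hasFDerivAt_pi'.1 (hf X).hasFDerivAt
  have hgi := hasFDerivAt_pi'.1 (hg X).hasFDerivAt
  have h : HasFDerivAt (fun Y => f Y ⬝ᵥ g Y)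
      (∑ i, ((f X i) • ((ContinuousLinearMap.proj i).comp (fderiv ℝ g X))
        + (g X i) • ((ContinuousLinearMap.proj i).comp (fderiv ℝ f X)))) X := by
    simp only [dotProduct]
    exact HasFDerivAt.fun_sum fun i _ => (hfi i).mul (hgi i)
  rw [h.fderiv]
  simp only [ContinuousLinearMap.sum_apply, ContinuousLinearMap.add_apply,
    ContinuousLinearMap.smul_apply, ContinuousLinearMap.comp_apply,
    ContinuousLinearMap.proj_apply, dotProduct, smul_eq_mul]
  rw [Finset.sum_add_distrib, add_comm]
  congr 1
  all_goals exact Finset.sum_congr rfl fun i _ => by ring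

lemma dot_deriv_zero' (f g : ℝ × ℝ → Fin 3 → ℝ) (hf : Differentiable ℝ f)
    (hg : Differentiable ℝ g) (c : ℝ) (h : ∀ Y, f Y ⬝ᵥ g Y = c) (X v : ℝ × ℝ) :
    fderiv ℝ f X v ⬝ᵥ g X + f X ⬝ᵥ fderiv ℝ g X v = 0 := by
  have h0 := fderiv_dot' f g hf hg X v
  have hc : (fun Y => f Y ⬝ᵥ g Y) = fun _ => c := funext h
  rw [hc] at h0
  simpa using h0.symm

/-- For a differentiable positively oriented orthonormal moving frame
(e₁, e₂, n) with n = e₁ × e₂, one has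
n · (∂₁n × ∂₂n) = ∂₁e₁ · ∂₂e₂ − ∂₁e₂ · ∂₂e₁. -/
theorem triple_product_eq_frame_identity (e1 e2 n : ℝ × ℝ → Fin 3 → ℝ)
    (h1 : Differentiable ℝ e1) (h2 : Differentiable ℝ e2) (hn : Differentiable ℝ n)
    (o11 : ∀ X, e1 X ⬝ᵥ e1 X = 1) (o22 : ∀ X, e2 X ⬝ᵥ e2 X = 1)
    (onn : ∀ X, n X ⬝ᵥ n X = 1)
    (o12 : ∀ X, e1 X ⬝ᵥ e2 X = 0) (o1n : ∀ X, e1 X ⬝ᵥ n X = 0)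
    (o2n : ∀ X, e2 X ⬝ᵥ n X = 0)
    (hcross : ∀ X, n X = e1 X ⨯₃ e2 X) (X : ℝ × ℝ) :
    n X ⬝ᵥ (fderiv ℝ n X (1, 0)) ⨯₃ (fderiv ℝ n X (0, 1)) =
      (fderiv ℝ e1 X (1, 0)) ⬝ᵥ (fderiv ℝ e2 X (0, 1)) -
        (fderiv ℝ e2 X (1, 0)) ⬝ᵥ (fderiv ℝ e1 X (0, 1)) := by
  set a := e1 X with ha
  set b := e2 X with hb
  set nn := n X with hnn
  set p := fderiv ℝ e1 X (1, 0) with hp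
  set q := fderiv ℝ e1 X (0, 1) with hq
  set r := fderiv ℝ e2 X (1, 0) with hr
  set s := fderiv ℝ e2 X (0, 1) with hs
  set u := fderiv ℝ n X (1, 0) with hu
  set w := fderiv ℝ n X (0, 1) with hw
  -- orthonormality at X
  have haa : a ⬝ᵥ a = 1 := o11 X
  have hbb : b ⬝ᵥ b = 1 := o22 X
  have hab : a ⬝ᵥ b = 0 := o12 X
  -- derivative relations
  have d11₁ : p ⬝ᵥ a + a ⬝ᵥ p = 0 := dot_deriv_zero' e1 e1 h1 h1 1 o11 X (1,0)
  have d11₂ : q ⬝ᵥ a + a ⬝ᵥ q = 0 := dot_deriv_zero' e1 e1 h1 h1 1 o11 X (0,1)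
  have d22₁ : r ⬝ᵥ b + b ⬝ᵥ r = 0 := dot_deriv_zero' e2 e2 h2 h2 1 o22 X (1,0)
  have d22₂ : s ⬝ᵥ b + b ⬝ᵥ s = 0 := dot_deriv_zero' e2 e2 h2 h2 1 o22 X (0,1)
  have d12₁ : p ⬝ᵥ b + a ⬝ᵥ r = 0 := dot_deriv_zero' e1 e2 h1 h2 0 o12 X (1,0)
  have d12₂ : q ⬝ᵥ b + a ⬝ᵥ s = 0 := dot_deriv_zero' e1 e2 h1 h2 0 o12 X (0,1)
  have d1n₁ : p ⬝ᵥ nn + a ⬝ᵥ u = 0 := dot_deriv_zero' e1 n h1 hn 0 o1n X (1,0)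
  have d1n₂ : q ⬝ᵥ nn + a ⬝ᵥ w = 0 := dot_deriv_zero' e1 n h1 hn 0 o1n X (0,1)
  have d2n₁ : r ⬝ᵥ nn + b ⬝ᵥ u = 0 := dot_deriv_zero' e2 n h2 hn 0 o2n X (1,0)
  have d2n₂ : s ⬝ᵥ nn + b ⬝ᵥ w = 0 := dot_deriv_zero' e2 n h2 hn 0 o2n X (0,1)
  -- symmetric versions
  have cpa : p ⬝ᵥ a = a ⬝ᵥ p := dotProduct_comm p a
  have cqa : q ⬝ᵥ a = a ⬝ᵥ q := dotProduct_comm q a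
  have crb : r ⬝ᵥ b = b ⬝ᵥ r := dotProduct_comm r b
  have csb : s ⬝ᵥ b = b ⬝ᵥ s := dotProduct_comm s b
  have hpa : p ⬝ᵥ a = 0 := by linarith
  have hqa : q ⬝ᵥ a = 0 := by linarith
  have hrb : r ⬝ᵥ b = 0 := by linarith
  have hsb : s ⬝ᵥ b = 0 := by linarith
  -- Lagrange for the LHS
  have hL : nn ⬝ᵥ (u ⨯₃ w) = (a ⬝ᵥ u) * (b ⬝ᵥ w) - (a ⬝ᵥ w) * (b ⬝ᵥ u) := by
    rw [hnn, hcross X]; exact lagrange' a b u w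
  -- Parseval for the RHS
  have hps : p ⬝ᵥ s = (p ⬝ᵥ a) * (s ⬝ᵥ a) + (p ⬝ᵥ b) * (s ⬝ᵥ b)
      + (p ⬝ᵥ nn) * (s ⬝ᵥ nn) := by
    rw [hnn, hcross X]; exact parseval' a b p s haa hbb hab
  have hrq : r ⬝ᵥ q = (r ⬝ᵥ a) * (q ⬝ᵥ a) + (r ⬝ᵥ b) * (q ⬝ᵥ b)
      + (r ⬝ᵥ nn) * (q ⬝ᵥ nn) := by
    rw [hnn, hcross X]; exact parseval' a b r q haa hbb hab
  linear_combination hL + (b ⬝ᵥ w) * d1n₁ - (p ⬝ᵥ nn) * d2n₂ - (b ⬝ᵥ u) * d1n₂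
    + (q ⬝ᵥ nn) * d2n₁ - hps + hrq - (s ⬝ᵥ a) * hpa - (p ⬝ᵥ b) * hsb
    + (r ⬝ᵥ a) * hqa + (q ⬝ᵥ b) * hrb
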